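/- Let P be a Euclidean affine space (a metric space that is a torsor over a real inner product space), and let A, B, C, D, M be points of P with M = midpoint A C, M = midpoint B D, and ∠ B C D = π/2. Then dist M D = dist M A; that is, triangle DMA is isosceles. -/

import Mathlib

open EuclideanGeometry

variable {V : Type*} {P : Type*} [NormedAddCommGroup V] [InnerProductSpace ℝ V]
  [MetricSpace P] [NormedAddTorsor V P]

theorem tri_DMA_isosceles (A B C D M : P)
    (hAC : M = midpoint ℝ A C) (hBD : M = midpoint ℝ B D)
    (hBCD : ∠ B C D = Real.pi / 2) :
    dist M D = dist M A := by
  have hi : (inner ℝ (B -ᵥ C) (D -ᵥ C) : ℝ) = 0 :=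
    (InnerProductGeometry.inner_eq_zero_iff_angle_eq_pi_div_two _ _).2 hBCD
  have hMA : dist M A = dist M C := by
    subst hAC
    rw [dist_midpoint_left, dist_midpoint_right]
  rw [hMA]
  subst hBD
  rw [dist_eq_norm_vsub V, dist_eq_norm_vsub V, midpoint_vsub_right]
  have h1 : midpoint ℝ B D -ᵥ C = (2 : ℝ)⁻¹ • ((B -ᵥ C) + (D -ᵥ C)) := by
    rw [midpoint_vsub]; norm_num
  have h2 : B -ᵥ D = (B -ᵥ C) - (D -ᵥ C) := (vsub_sub_vsub_cancel_right B D C).symm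
  have key : ‖(⅟2 : ℝ) • (B -ᵥ D)‖ ^ 2 = ‖midpoint ℝ B D -ᵥ C‖ ^ 2 := by
    rw [h1, h2, norm_smul, norm_smul, mul_pow, mul_pow]
    have e1 := norm_add_sq_real (B -ᵥ C) (D -ᵥ C)
    have e2 := norm_sub_sq_real (B -ᵥ C) (D -ᵥ C)
    rw [hi] at e1 e2
    have : ‖(⅟2 : ℝ)‖ = ‖(2 : ℝ)⁻¹‖ := by norm_num
    rw [this]
    nlinarith [e1, e2]
  calc ‖(⅟2 : ℝ) • (B -ᵥ D)‖ = Real.sqrt (‖(⅟2 : ℝ) • (B -ᵥ D)‖ ^ 2) :=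
        (Real.sqrt_sq (norm_nonneg _)).symm
    _ = Real.sqrt (‖midpoint ℝ B D -ᵥ C‖ ^ 2) := by rw [key]
    _ = ‖midpoint ℝ B D -ᵥ C‖ := Real.sqrt_sq (norm_nonneg _)
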